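/- arXiv:1011.1328 — 8 statements merged into one kernel-verified Lean document; each statement's English description precedes it below -/
import Mathlib

section
/- Let ξ and α be nonnegative random variables on a probability space (Ω, F, P), let β > 0, and let {Γ_x : x ≥ 0} be a family of events such that P({ξ > α + βx} ∩ Γ_x) = 0 for every x ≥ 0. Assume there exists an integrable function M : [0,∞) → [0,∞) with P(Γ_x^c) ≤ M(x) for all x ≥ 0. Then E ξ ≤ E α + β M*, where M* = ∫_0^∞ M(x) dx. -/
open MeasureTheory

/-- Mean forecast inequality (Galtchouk–Pergamenshchikov):
if `ξ, α ≥ 0`, `β > 0`, events `Γ x` satisfy `P({ξ > α + βx} ∩ Γ x) = 0` for all `x ≥ 0`,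
and `P((Γ x)ᶜ) ≤ M x` for an integrable `M ≥ 0` on `[0,∞)`, then
`E ξ ≤ E α + β ∫_0^∞ M`. -/
theorem stmt0 {Ω : Type*} [MeasurableSpace Ω] (P : Measure Ω) [IsProbabilityMeasure P]
    (ξ α : Ω → ℝ) (hξm : Measurable ξ) (hαm : Measurable α)
    (hξ : ∀ ω, 0 ≤ ξ ω) (hα : ∀ ω, 0 ≤ α ω)
    (β : ℝ) (hβ : 0 < β) (Γ : ℝ → Set Ω)
    (hΓ : ∀ x ≥ (0:ℝ), P ({ω | ξ ω > α ω + β * x} ∩ Γ x) = 0)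
    (M : ℝ → ℝ) (hM0 : ∀ x ≥ (0:ℝ), 0 ≤ M x)
    (hMint : IntegrableOn M (Set.Ici 0))
    (hMdom : ∀ x ≥ (0:ℝ), (P ((Γ x)ᶜ)).toReal ≤ M x) :
    ∫⁻ ω, ENNReal.ofReal (ξ ω) ∂P ≤
      ∫⁻ ω, ENNReal.ofReal (α ω) ∂P +
        ENNReal.ofReal (β * ∫ x in Set.Ici (0:ℝ), M x) := by
  set g : Ω → ℝ := fun ω => max (ξ ω - α ω) 0 with hg
  have hgm : Measurable g := (hξm.sub hαm).max measurable_const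
  have hgnn : ∀ ω, 0 ≤ g ω := fun ω => le_max_right _ _
  -- step 1: pointwise bound
  have h1 : ∫⁻ ω, ENNReal.ofReal (ξ ω) ∂P ≤
      ∫⁻ ω, ENNReal.ofReal (α ω) ∂P + ∫⁻ ω, ENNReal.ofReal (g ω) ∂P := by
    rw [← lintegral_add_left hαm.ennreal_ofReal]
    refine lintegral_mono fun ω => ?_
    rw [← ENNReal.ofReal_add (hα ω) (hgnn ω)]
    exact ENNReal.ofReal_le_ofReal (by simp [hg]; nlinarith [le_max_left (ξ ω - α ω) (0:ℝ), hξ ω])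
  -- step 2: layer cake for g
  have h2 : ∫⁻ ω, ENNReal.ofReal (g ω) ∂P = ∫⁻ t in Set.Ioi (0:ℝ), P {ω | t < g ω} :=
    lintegral_eq_lintegral_meas_lt P (Filter.Eventually.of_forall hgnn) hgm.aemeasurable
  -- step 3: bound the layer measure
  have h3 : ∀ t ∈ Set.Ioi (0:ℝ), P {ω | t < g ω} ≤ ENNReal.ofReal (M (β⁻¹ * t)) := by
    intro t ht
    have htpos : (0:ℝ) < t := ht
    have hx : (0:ℝ) ≤ β⁻¹ * t := by positivity
    have hsub : {ω | t < g ω} ⊆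
        ({ω | ξ ω > α ω + β * (β⁻¹ * t)} ∩ Γ (β⁻¹ * t)) ∪ (Γ (β⁻¹ * t))ᶜ := by
      intro ω hω
      have : t < ξ ω - α ω := by
        simp only [Set.mem_setOf_eq, hg] at hω
        rcases max_cases (ξ ω - α ω) (0:ℝ) with ⟨h, _⟩ | ⟨h, _⟩ <;> [exact h ▸ hω; linarith]
      have hgt : ξ ω > α ω + β * (β⁻¹ * t) := by
        rw [← mul_assoc, mul_inv_cancel₀ hβ.ne', one_mul]; linarith
      by_cases hΓω : ω ∈ Γ (β⁻¹ * t)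
      · exact Or.inl ⟨hgt, hΓω⟩
      · exact Or.inr hΓω
    calc P {ω | t < g ω} ≤ P (({ω | ξ ω > α ω + β * (β⁻¹ * t)} ∩ Γ (β⁻¹ * t)) ∪ (Γ (β⁻¹ * t))ᶜ) :=
          measure_mono hsub
      _ ≤ P ({ω | ξ ω > α ω + β * (β⁻¹ * t)} ∩ Γ (β⁻¹ * t)) + P ((Γ (β⁻¹ * t))ᶜ) :=
          measure_union_le _ _
      _ = P ((Γ (β⁻¹ * t))ᶜ) := by rw [hΓ _ hx, zero_add]
      _ ≤ ENNReal.ofReal (M (β⁻¹ * t)) := by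
          rw [← ENNReal.ofReal_toReal (measure_ne_top P _)]
          exact ENNReal.ofReal_le_ofReal (hMdom _ hx)
  -- integrability of the scaled M
  have hMint' : IntegrableOn M (Set.Ioi 0) := hMint.mono_set Set.Ioi_subset_Ici_self
  have hint : IntegrableOn (fun t => M (β⁻¹ * t)) (Set.Ioi 0) := by
    rw [integrableOn_Ioi_comp_mul_left_iff M 0 (inv_pos.mpr hβ), mul_zero]
    exact hMint'
  have hnn' : ∀ᵐ t ∂(volume.restrict (Set.Ioi (0:ℝ))), 0 ≤ M (β⁻¹ * t) := by
    filter_upwards [ae_restrict_mem measurableSet_Ioi] with t ht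
    have ht' : (0:ℝ) < t := ht
    exact hM0 _ (by positivity)
  -- step 4: bound the lintegral
  have h4 : ∫⁻ t in Set.Ioi (0:ℝ), P {ω | t < g ω} ≤
      ENNReal.ofReal (∫ t in Set.Ioi (0:ℝ), M (β⁻¹ * t)) := by
    rw [ofReal_integral_eq_lintegral_ofReal hint hnn']
    exact setLIntegral_mono_ae hint.aemeasurable.ennreal_ofReal
      (Filter.Eventually.of_forall h3)
  -- step 5: change of variables
  have h5 : ∫ t in Set.Ioi (0:ℝ), M (β⁻¹ * t) = β * ∫ x in Set.Ici (0:ℝ), M x := by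
    rw [integral_comp_mul_left_Ioi M 0 (inv_pos.mpr hβ), mul_zero, inv_inv, smul_eq_mul,
      ← MeasureTheory.integral_Ici_eq_integral_Ioi]
  calc ∫⁻ ω, ENNReal.ofReal (ξ ω) ∂P
      ≤ ∫⁻ ω, ENNReal.ofReal (α ω) ∂P + ∫⁻ ω, ENNReal.ofReal (g ω) ∂P := h1
    _ ≤ ∫⁻ ω, ENNReal.ofReal (α ω) ∂P + ENNReal.ofReal (β * ∫ x in Set.Ici (0:ℝ), M x) := by
        gcongr
        rw [h2, ← h5]
        exact h4
end

section
/- Let λ* > 0 and let z* be the unique root in (1, ∞) of the equation ln z = z − 2. For μ ∈ (0, 1/(2λ*)) set c(μ) = −(1/2) ln(1 − 2λ*μ). Then for every μ ∈ (0, 1/(2λ*)) and every ρ ∈ ℝ with ρ ≥ 4(c(μ)+1)/μ one has ρ + 4c(μ)/μ ≥ 8λ* z*; moreover, for μ* = (z*−1)/(2λ* z*) and ρ* = 4λ* z*²/(z*−1) one has ρ* = 4(c(μ*)+1)/μ* and ρ* + 4c(μ*)/μ* = 8λ* z*. -/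
/-- Optimality of the penalty coefficient: with
`c(μ) = −(1/2) ln(1 − 2λ*μ)`, for every `μ ∈ (0, 1/(2λ*))` and every
`ρ ≥ 4(c(μ)+1)/μ` one has `ρ + 4c(μ)/μ ≥ 8λ* z*`, and equality (with the
constraint active) holds at `μ* = (z*−1)/(2λ* z*)`, `ρ* = 4λ* z*²/(z*−1)`,
where `z*` is the unique root in `(1,∞)` of `ln z = z − 2`. -/
theorem stmt6 (lamStar : ℝ) (hlam : 0 < lamStar)
    (zStar : ℝ) (hz1 : 1 < zStar) (hz : Real.log zStar = zStar - 2)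
    (c : ℝ → ℝ) (hc : ∀ μ, c μ = -(1 / 2) * Real.log (1 - 2 * lamStar * μ)) :
    (∀ μ : ℝ, 0 < μ → μ < 1 / (2 * lamStar) →
      ∀ ρ : ℝ, 4 * (c μ + 1) / μ ≤ ρ →
        8 * lamStar * zStar ≤ ρ + 4 * c μ / μ) ∧
    (4 * lamStar * zStar ^ 2 / (zStar - 1)
        = 4 * (c ((zStar - 1) / (2 * lamStar * zStar)) + 1) / ((zStar - 1) / (2 * lamStar * zStar)) ∧
      4 * lamStar * zStar ^ 2 / (zStar - 1)
          + 4 * c ((zStar - 1) / (2 * lamStar * zStar)) / ((zStar - 1) / (2 * lamStar * zStar))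
        = 8 * lamStar * zStar) := by
  have hz0 : (0:ℝ) < zStar := by linarith
  constructor
  · intro μ hμ0 hμ1 ρ hρ
    have hlμ : 2 * lamStar * μ < 1 := by
      have h2l : 0 < 2 * lamStar := by linarith
      rw [lt_div_iff₀ h2l] at hμ1; linarith [hμ1]
    have h1 : 0 < 1 - 2 * lamStar * μ := by linarith
    set z := 1 / (1 - 2 * lamStar * μ) with hzdef
    have hzpos : 0 < z := by positivity
    have hzgt1 : 1 < z := by
      rw [hzdef, lt_div_iff₀ h1]
      nlinarith
    have hlog : Real.log (1 - 2 * lamStar * μ) = - Real.log z := by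
      rw [hzdef, Real.log_div one_ne_zero (ne_of_gt h1), Real.log_one]; ring
    have key : z * (zStar - 2) + z - zStar ≤ z * Real.log z := by
      have h := Real.log_le_sub_one_of_pos (show 0 < zStar / z by positivity)
      rw [Real.log_div (ne_of_gt hz0) (ne_of_gt hzpos), hz] at h
      have h2 := mul_le_mul_of_nonneg_left h (le_of_lt hzpos)
      have hzz : z * (zStar / z - 1) = zStar - z := by field_simp
      nlinarith [h2]
    have hμz : 2 * lamStar * μ = (z - 1) / z := by
      rw [hzdef]; field_simp; ring
    have hcμ : c μ = (1 / 2) * Real.log z := by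
      rw [hc, hlog]; ring
    -- main bound: 8 λ z* μ ≤ 8 c μ + 4
    have hmain : 8 * lamStar * zStar * μ ≤ 8 * c μ + 4 := by
      have hμval : μ = (z - 1) / (2 * lamStar * z) := by
        field_simp at hμz ⊢
        nlinarith [hμz]
      rw [hcμ, hμval]
      have h8 : 8 * lamStar * zStar * ((z - 1) / (2 * lamStar * z)) = 4 * zStar * (z - 1) / z := by
        field_simp; ring
      rw [h8, div_le_iff₀ hzpos]
      nlinarith [key]
    have hstep : 8 * lamStar * zStar ≤ (8 * c μ + 4) / μ := by
      rw [le_div_iff₀ hμ0]; linarith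
    have heq : (8 * c μ + 4) / μ = 4 * (c μ + 1) / μ + 4 * c μ / μ := by
      field_simp; ring
    linarith [heq ▸ hstep]
  · set μs := (zStar - 1) / (2 * lamStar * zStar) with hμs
    have hμspos : 0 < μs := by
      apply div_pos (by linarith) (by positivity)
    have h1s : 1 - 2 * lamStar * μs = 1 / zStar := by
      rw [hμs]; field_simp; ring_nf
    have hcs : c μs = (zStar - 2) / 2 := by
      rw [hc, h1s, Real.log_div one_ne_zero (ne_of_gt hz0), Real.log_one, hz]; ring
    have hz1' : zStar - 1 ≠ 0 := by linarith
    have hzne : zStar ≠ 0 := ne_of_gt hz0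
    have hlne : lamStar ≠ 0 := ne_of_gt hlam
    constructor
    · rw [hcs, hμs]; field_simp; ring
    · rw [hcs, hμs]; field_simp; ring
end

section
/- Let d > 2 be an integer, n > 0, and define v : ℝ^d \ {0} → ℝ^d by v(u) = −((d−2)/(n‖u‖²)) u. Then for every u ≠ 0, (2/n) div v(u) + ‖v(u)‖² = −(d−2)²/(n² ‖u‖²). In particular this quantity is strictly negative for all u ≠ 0. -/
/-- James–Stein type shrinkage: for `d > 2` and
`v(u) = −((d−2)/(n‖u‖²)) u` on `ℝ^d \ {0}`, one has
`(2/n) div v(u) + ‖v(u)‖² = −(d−2)²/(n²‖u‖²) < 0` for every `u ≠ 0`. -/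
theorem stmt8 (d : ℕ) (hd : 2 < d) (n : ℝ) (hn : 0 < n)
    (v : (Fin d → ℝ) → (Fin d → ℝ))
    (hv : ∀ u : Fin d → ℝ, u ≠ 0 →
      v u = -(((d : ℝ) - 2) / (n * ∑ i, u i ^ 2)) • u) :
    ∀ u : Fin d → ℝ, u ≠ 0 →
      ((2 / n) * (∑ j, fderiv ℝ (fun w => v w j) u (Pi.single j 1)) + (∑ j, v u j ^ 2)
          = -((d : ℝ) - 2) ^ 2 / (n ^ 2 * ∑ i, u i ^ 2)) ∧
      ((2 / n) * (∑ j, fderiv ℝ (fun w => v w j) u (Pi.single j 1)) + (∑ j, v u j ^ 2) < 0) := by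
  intro u hu
  have hn' : n ≠ 0 := hn.ne'
  have hd2 : (0:ℝ) < (d:ℝ) - 2 := by
    have : (2:ℝ) < d := by exact_mod_cast hd
    linarith
  obtain ⟨i₀, hi₀⟩ : ∃ i, u i ≠ 0 := Function.ne_iff.mp hu
  have hS_pos : 0 < ∑ i, u i ^ 2 :=
    Finset.sum_pos' (fun i _ => sq_nonneg _) ⟨i₀, Finset.mem_univ _, by positivity⟩
  set S := ∑ i, u i ^ 2 with hSdef
  have hS_ne : S ≠ 0 := ne_of_gt hS_pos
  set c : ℝ := -(((d:ℝ) - 2) / n) with hcdef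
  have hkey : ∀ T : ℝ, -(((d:ℝ) - 2) / (n * T)) = c * T⁻¹ := by
    intro T
    rw [hcdef, ← div_div, div_eq_mul_inv (((d:ℝ)-2)/n) T, neg_mul]
  -- derivative of the sum of squares
  set L : (Fin d → ℝ) →L[ℝ] ℝ :=
    ∑ i : Fin d, (2 * u i) • (ContinuousLinearMap.proj i : (Fin d → ℝ) →L[ℝ] ℝ) with hLdef
  have hS' : HasFDerivAt (fun w : Fin d → ℝ => ∑ i, w i ^ 2) L u := by
    apply HasFDerivAt.fun_sum
    intro i _
    have h1 : HasDerivAt (fun t : ℝ => t ^ 2) (2 * u i) (u i) := by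
      simpa using hasDerivAt_pow 2 (u i)
    exact h1.comp_hasFDerivAt (f := fun w : Fin d → ℝ => w i) u (hasFDerivAt_apply i u)
  have hinv : HasFDerivAt (fun w : Fin d → ℝ => (∑ i, w i ^ 2)⁻¹) ((-(S ^ 2)⁻¹) • L) u :=
    (hasDerivAt_inv hS_ne).comp_hasFDerivAt u hS'
  have hcomp : ∀ j, HasFDerivAt (fun w : Fin d → ℝ => (c * (∑ i, w i ^ 2)⁻¹) * w j)
      ((c * S⁻¹) • (ContinuousLinearMap.proj j : (Fin d → ℝ) →L[ℝ] ℝ)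
        + u j • (c • ((-(S ^ 2)⁻¹) • L))) u := by
    intro j
    exact (hinv.const_mul c).mul (hasFDerivAt_apply j u)
  have hL1 : ∀ j, L (Pi.single j 1) = 2 * u j := by
    intro j
    rw [hLdef]
    simp only [ContinuousLinearMap.sum_apply, ContinuousLinearMap.smul_apply,
      ContinuousLinearMap.proj_apply, smul_eq_mul, Pi.single_apply]
    simp [Finset.sum_ite_eq']
  have hEq : ∀ j, fderiv ℝ (fun w => v w j) u (Pi.single j 1)
      = c * S⁻¹ + u j * (c * (-(S ^ 2)⁻¹ * (2 * u j))) := by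
    intro j
    have hev : (fun w => v w j) =ᶠ[nhds u] (fun w => (c * (∑ i, w i ^ 2)⁻¹) * w j) := by
      filter_upwards [eventually_ne_nhds hu] with w hw
      rw [hv w hw]
      simp only [Pi.smul_apply, smul_eq_mul]
      rw [hkey]
    rw [hev.fderiv_eq, (hcomp j).fderiv]
    simp only [ContinuousLinearMap.add_apply, ContinuousLinearMap.smul_apply,
      ContinuousLinearMap.proj_apply, smul_eq_mul, Pi.single_eq_same, hL1 j]
    ring
  have hsum1 : ∑ j, fderiv ℝ (fun w => v w j) u (Pi.single j 1)
      = (d:ℝ) * (c * S⁻¹) + (c * (-(S ^ 2)⁻¹) * 2) * S := by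
    calc ∑ j, fderiv ℝ (fun w => v w j) u (Pi.single j 1)
        = ∑ j : Fin d, (c * S⁻¹ + (c * (-(S ^ 2)⁻¹) * 2) * u j ^ 2) := by
          refine Finset.sum_congr rfl fun j _ => ?_
          rw [hEq j]; ring
      _ = (d:ℝ) * (c * S⁻¹) + (c * (-(S ^ 2)⁻¹) * 2) * S := by
          rw [Finset.sum_add_distrib, Finset.sum_const, ← Finset.mul_sum, ← hSdef]
          simp [mul_comm]
  have hvuj : ∀ j, v u j = (c * S⁻¹) * u j := by
    intro j
    rw [hv u hu]
    simp only [Pi.smul_apply, smul_eq_mul]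
    rw [← hSdef, hkey]
  have hsum2 : ∑ j, v u j ^ 2 = (c * S⁻¹) ^ 2 * S := by
    calc ∑ j, v u j ^ 2 = ∑ j : Fin d, (c * S⁻¹) ^ 2 * u j ^ 2 := by
          refine Finset.sum_congr rfl fun j _ => ?_
          rw [hvuj j]; ring
      _ = (c * S⁻¹) ^ 2 * S := by rw [← Finset.mul_sum, ← hSdef]
  have hmain : (2 / n) * (∑ j, fderiv ℝ (fun w => v w j) u (Pi.single j 1))
      + (∑ j, v u j ^ 2) = -((d : ℝ) - 2) ^ 2 / (n ^ 2 * S) := by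
    rw [hsum1, hsum2, hcdef]
    field_simp
    ring
  refine ⟨hmain, ?_⟩
  rw [hmain]
  apply div_neg_of_neg_of_pos
  · have : 0 < ((d:ℝ) - 2) ^ 2 := by positivity
    linarith
  · positivity
end

section
/- Let k ≥ 0 be an integer and let V : ℝ → ℝ be (k+1)-times continuously differentiable with V(u) = 0 for |u| ≥ 1. Set V* = sup_{|a|≤1} |V^{(k+1)}(a)|. Let m ≥ 1 be an integer, h = 1/(2m), and a_j = (2j−1)/(2m) for 1 ≤ j ≤ m. Then for every α ∈ [0,1] and all s, t ∈ [0,1], Σ_{j=1}^m |V^{(k)}((t−a_j)/h) − V^{(k)}((s−a_j)/h)| ≤ 2^{2−α} V* (|t−s|/h)^α. -/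
private lemma aux_iterZero (V : ℝ → ℝ) (hV0 : ∀ u : ℝ, 1 ≤ |u| → V u = 0)
    (n : ℕ) (x : ℝ) (hx : 1 < |x|) : iteratedDeriv n V x = 0 := by
  have hopen : IsOpen {y : ℝ | 1 < |y|} := isOpen_lt continuous_const continuous_abs
  have hev : V =ᶠ[nhds x] (fun _ => (0 : ℝ)) := by
    filter_upwards [hopen.mem_nhds hx] with y hy
    exact hV0 y hy.le
  rw [hev.iteratedDeriv_eq n, iteratedDeriv_eq_iteratedFDeriv, iteratedFDeriv_zero_fun]
  simp

/-- Hölder-type bound for the sum of increments of the `k`-th derivative of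
the scaled kernels `V((·−a_j)/h)`: for `V ∈ C^{k+1}` vanishing outside `[−1,1]`,
`h = 1/2m`, `a_j = (2j−1)/2m`, and any `α ∈ [0,1]`, `s, t ∈ [0,1]`,
`Σ_{j=1}^m |V^{(k)}((t−a_j)/h) − V^{(k)}((s−a_j)/h)| ≤ 2^{2−α} V* (|t−s|/h)^α`. -/
theorem stmt9 (k : ℕ) (V : ℝ → ℝ) (hV : ContDiff ℝ (k + 1) V)
    (hV0 : ∀ u : ℝ, 1 ≤ |u| → V u = 0)
    (Vstar : ℝ)
    (hVstar : Vstar = sSup ((fun a => |iteratedDeriv (k + 1) V a|) '' Set.Icc (-1 : ℝ) 1))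
    (m : ℕ) (hm : 1 ≤ m) (h : ℝ) (hh : h = 1 / (2 * m))
    (a : ℕ → ℝ) (ha : ∀ j : ℕ, a j = (2 * (j : ℝ) - 1) / (2 * m))
    (α : ℝ) (hα : α ∈ Set.Icc (0 : ℝ) 1)
    (s t : ℝ) (hs : s ∈ Set.Icc (0 : ℝ) 1) (ht : t ∈ Set.Icc (0 : ℝ) 1) :
    ∑ j ∈ Finset.Icc 1 m,
        |iteratedDeriv k V ((t - a j) / h) - iteratedDeriv k V ((s - a j) / h)| ≤
      (2 : ℝ) ^ (2 - α) * Vstar * (|t - s| / h) ^ α := by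
  obtain ⟨hα0, hα1⟩ := hα
  have hm0 : (0:ℝ) < m := by exact_mod_cast hm
  have hhpos : 0 < h := by rw [hh]; positivity
  set W := iteratedDeriv k V with hW
  have Wcont : Continuous W := hV.continuous_iteratedDeriv k (by exact_mod_cast Nat.le_succ k)
  -- W vanishes outside (-1, 1)
  have Wzero : ∀ x : ℝ, 1 ≤ |x| → W x = 0 := by
    have h1 : Set.EqOn W (fun _ => (0:ℝ)) (Set.Ici (1:ℝ)) := by
      have he : Set.EqOn W (fun _ => (0:ℝ)) (Set.Ioi (1:ℝ)) := fun y hy =>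
        aux_iterZero V hV0 k y
          (by rw [abs_of_pos (lt_trans one_pos hy)]; exact hy)
      simpa [closure_Ioi] using he.closure Wcont continuous_const
    have h2 : Set.EqOn W (fun _ => (0:ℝ)) (Set.Iic (-1:ℝ)) := by
      have he : Set.EqOn W (fun _ => (0:ℝ)) (Set.Iio (-1:ℝ)) := by
        intro y hy
        simp only [Set.mem_Iio] at hy
        have hy' : (1:ℝ) < |y| := by rw [abs_of_neg (by linarith)]; linarith
        exact aux_iterZero V hV0 k y hy'
      simpa [closure_Iio] using he.closure Wcont continuous_const
    intro x hx
    rcases abs_cases x with ⟨he, _⟩ | ⟨he, _⟩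
    · exact h1 (by rw [he] at hx; exact hx)
    · refine h2 ?_
      rw [he] at hx
      simp only [Set.mem_Iic]; linarith
  -- bounds on the (k+1)-st derivative
  have contD : Continuous fun z => |iteratedDeriv (k+1) V z| :=
    (hV.continuous_iteratedDeriv (k+1) le_rfl).abs
  have hbdd : BddAbove ((fun z => |iteratedDeriv (k + 1) V z|) '' Set.Icc (-1 : ℝ) 1) :=
    (isCompact_Icc.image contD).bddAbove
  have hVs_le : ∀ x ∈ Set.Icc (-1:ℝ) 1, |iteratedDeriv (k+1) V x| ≤ Vstar := by
    intro x hx; rw [hVstar]; exact le_csSup hbdd ⟨x, hx, rfl⟩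
  have hVs0 : 0 ≤ Vstar := le_trans (abs_nonneg _) (hVs_le 0 (by norm_num))
  have hD_le : ∀ x : ℝ, |iteratedDeriv (k+1) V x| ≤ Vstar := by
    intro x
    rcases le_or_gt |x| 1 with hx | hx
    · exact hVs_le x (abs_le.mp hx)
    · rw [aux_iterZero V hV0 (k+1) x hx]; simpa using hVs0
  -- Lipschitz bound on W
  have hLip : ∀ x y : ℝ, |W x - W y| ≤ Vstar * |x - y| := by
    intro x y
    have hdiff : ∀ z ∈ (Set.univ : Set ℝ), DifferentiableAt ℝ W z := fun z _ =>
      (hV.differentiable_iteratedDeriv k (by exact_mod_cast Nat.lt_succ_self k)) z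
    have hbound : ∀ z ∈ (Set.univ : Set ℝ), ‖deriv W z‖ ≤ Vstar := by
      intro z _
      show ‖deriv (iteratedDeriv k V) z‖ ≤ Vstar
      rw [← iteratedDeriv_succ, Real.norm_eq_abs]
      exact hD_le z
    have := Convex.norm_image_sub_le_of_norm_deriv_le hdiff hbound convex_univ
      (Set.mem_univ y) (Set.mem_univ x)
    simpa [Real.norm_eq_abs] using this
  -- sup bound on W
  have hWbdd : ∀ x : ℝ, |W x| ≤ Vstar := by
    intro x
    rcases le_or_gt 1 |x| with hx | hx
    · rw [Wzero x hx]; simpa using hVs0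
    · rw [abs_lt] at hx
      rcases le_or_gt x 0 with hx0 | hx0
      · have h1 := hLip x (-1)
        have habs : |x - (-1)| ≤ 1 := by rw [abs_of_nonneg (by linarith)]; linarith
        calc |W x| = |W x - W (-1)| := by rw [Wzero (-1) (by norm_num), sub_zero]
          _ ≤ Vstar * |x - (-1)| := h1
          _ ≤ Vstar * 1 := mul_le_mul_of_nonneg_left habs hVs0
          _ = Vstar := mul_one _
      · have h1 := hLip x 1
        have habs : |x - 1| ≤ 1 := by rw [abs_of_nonpos (by linarith)]; linarith
        calc |W x| = |W x - W 1| := by rw [Wzero 1 (by norm_num), sub_zero]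
          _ ≤ Vstar * |x - 1| := h1
          _ ≤ Vstar * 1 := mul_le_mul_of_nonneg_left habs hVs0
          _ = Vstar := mul_one _
  -- the unique index near a point
  have key : ∀ u : ℝ, 0 ≤ u → ∀ j : ℕ, |u - a j| < h → j = (⌊u * (m:ℝ)⌋).toNat + 1 := by
    intro u hu j hj
    rw [ha j, hh, abs_lt] at hj
    have h2m : (0:ℝ) < 2 * m := by positivity
    have e1 := mul_lt_mul_of_pos_right hj.1 h2m
    have e2 := mul_lt_mul_of_pos_right hj.2 h2m
    rw [neg_mul, one_div, inv_mul_cancel₀ (ne_of_gt h2m), sub_mul,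
      div_mul_cancel₀ _ (ne_of_gt h2m)] at e1
    rw [sub_mul, div_mul_cancel₀ _ (ne_of_gt h2m), one_div,
      inv_mul_cancel₀ (ne_of_gt h2m)] at e2
    have hgt : (j:ℝ) - 1 < u * m := by nlinarith
    have hlt : u * m < (j:ℝ) := by nlinarith
    have hj1 : 1 ≤ j := by
      have : (0:ℝ) < (j:ℝ) := lt_of_le_of_lt (by positivity) hlt
      exact_mod_cast this
    have hfloor : ⌊u * (m:ℝ)⌋ = (j:ℤ) - 1 := by
      rw [Int.floor_eq_iff]
      constructor
      · push_cast; linarith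
      · push_cast; linarith
    rw [hfloor]; omega
  -- setup for the sum
  set r : ℝ := |t - s| / h with hr
  have hr0 : 0 ≤ r := by positivity
  set jt : ℕ := (⌊t * (m:ℝ)⌋).toNat + 1 with hjt
  set js : ℕ := (⌊s * (m:ℝ)⌋).toNat + 1 with hjs
  set Term : ℕ → ℝ := fun j => |W ((t - a j) / h) - W ((s - a j) / h)| with hTerm
  -- terms away from jt, js vanish
  have hzero_term : ∀ j : ℕ, j ∉ ({jt, js} : Finset ℕ) → Term j = 0 := by
    intro j hj
    simp only [Finset.mem_insert, Finset.mem_singleton, not_or] at hj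
    have hwt : W ((t - a j) / h) = 0 := by
      apply Wzero
      rw [abs_div, abs_of_pos hhpos, le_div_iff₀ hhpos, one_mul]
      by_contra hc
      exact hj.1 (key t ht.1 j (lt_of_not_ge hc))
    have hws : W ((s - a j) / h) = 0 := by
      apply Wzero
      rw [abs_div, abs_of_pos hhpos, le_div_iff₀ hhpos, one_mul]
      by_contra hc
      exact hj.2 (key s hs.1 j (lt_of_not_ge hc))
    simp [hTerm, hwt, hws]
  -- each term is bounded
  set B : ℝ := Vstar * min 2 r with hB
  have hTermB : ∀ j : ℕ, Term j ≤ B := by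
    intro j
    have h1 : Term j ≤ Vstar * r := by
      have hl := hLip ((t - a j)/h) ((s - a j)/h)
      have heq : |(t - a j)/h - (s - a j)/h| = r := by
        have e : (t - a j)/h - (s - a j)/h = (t-s)/h := by ring
        rw [e, hr, abs_div, abs_of_pos hhpos]
      rw [heq] at hl
      exact hl
    have h2 : Term j ≤ Vstar * 2 := by
      calc Term j ≤ |W ((t - a j)/h)| + |W ((s - a j)/h)| := by
            simpa [Real.norm_eq_abs] using norm_sub_le (W ((t - a j)/h)) (W ((s - a j)/h))
        _ ≤ Vstar + Vstar := add_le_add (hWbdd _) (hWbdd _)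
        _ = Vstar * 2 := by ring
    rw [hB, mul_min_of_nonneg _ _ hVs0]
    exact le_min h2 h1
  have hB0 : 0 ≤ B := by
    rw [hB]
    exact mul_nonneg hVs0 (le_min (by norm_num) hr0)
  -- sum over the two possible indices
  have hsum_eq : ∑ j ∈ Finset.Icc 1 m, Term j
      = ∑ j ∈ Finset.Icc 1 m ∩ ({jt, js} : Finset ℕ), Term j := by
    refine (Finset.sum_subset (Finset.inter_subset_left) ?_).symm
    intro j hj hj2
    refine hzero_term j fun hmem => hj2 (Finset.mem_inter.mpr ⟨hj, hmem⟩)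
  have hcard : (Finset.Icc 1 m ∩ ({jt, js} : Finset ℕ)).card ≤ 2 := by
    refine le_trans (Finset.card_le_card (Finset.inter_subset_right)) ?_
    refine le_trans (Finset.card_insert_le _ _) ?_
    simp
  have hsum_le2 : ∑ j ∈ Finset.Icc 1 m ∩ ({jt, js} : Finset ℕ), Term j ≤ 2 * B := by
    calc ∑ j ∈ Finset.Icc 1 m ∩ ({jt, js} : Finset ℕ), Term j
        ≤ (Finset.Icc 1 m ∩ ({jt, js} : Finset ℕ)).card • B :=
          Finset.sum_le_card_nsmul _ _ _ (fun j _ => hTermB j)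
      _ = ((Finset.Icc 1 m ∩ ({jt, js} : Finset ℕ)).card : ℝ) * B := by
          rw [nsmul_eq_mul]
      _ ≤ 2 * B := by
          refine mul_le_mul_of_nonneg_right ?_ hB0
          exact_mod_cast hcard
  -- Hölder estimate on min 2 r
  have hmin : min 2 r ≤ (2:ℝ)^(1-α) * r^α := by
    rcases le_total r 2 with hrle | hrle
    · rcases eq_or_lt_of_le hr0 with hr0' | hr0'
      · rw [← hr0']
        have : min (2:ℝ) 0 = 0 := by norm_num
        rw [this]
        positivity
      · refine le_trans (min_le_right _ _) ?_
        have h1 : r = r^(1-α) * r^α := by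
          rw [← Real.rpow_add hr0', sub_add_cancel, Real.rpow_one]
        nth_rewrite 1 [h1]
        have hex : (0:ℝ) ≤ 1 - α := by linarith
        exact mul_le_mul_of_nonneg_right
          (Real.rpow_le_rpow hr0 hrle hex) (Real.rpow_nonneg hr0 _)
    · refine le_trans (min_le_left _ _) ?_
      have h1 : (2:ℝ) = 2^(1-α) * 2^α := by
        rw [← Real.rpow_add two_pos, sub_add_cancel, Real.rpow_one]
      nth_rewrite 1 [h1]
      have h20 : (0:ℝ) ≤ 2 := by norm_num
      exact mul_le_mul_of_nonneg_left
        (Real.rpow_le_rpow h20 hrle hα0) (Real.rpow_nonneg h20 _)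
  -- conclude
  calc ∑ j ∈ Finset.Icc 1 m, Term j
      = ∑ j ∈ Finset.Icc 1 m ∩ ({jt, js} : Finset ℕ), Term j := hsum_eq
    _ ≤ 2 * B := hsum_le2
    _ ≤ (2:ℝ)^(2-α) * Vstar * r^α := by
        have h2 : (2:ℝ)^(2-α) = 2 * 2^(1-α) := by
          rw [show (2:ℝ) - α = 1 + (1 - α) by ring, Real.rpow_add two_pos, Real.rpow_one]
        rw [h2, hB]
        calc 2 * (Vstar * min 2 r) ≤ 2 * (Vstar * ((2:ℝ)^(1-α) * r^α)) := by
              refine mul_le_mul_of_nonneg_left (mul_le_mul_of_nonneg_left hmin hVs0) (by norm_num)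
          _ = 2 * (2:ℝ)^(1-α) * Vstar * r^α := by ring
end

section
/- Let k ≥ 0 be an integer, 0 ≤ α < 1, and let V : ℝ → ℝ be (k+1)-times continuously differentiable with V(u) = 0 for |u| ≥ 1; set V* = sup_{|a|≤1} |V^{(k+1)}(a)|. Let m ≥ 1 be an integer, h = 1/(2m), a_j = (2j−1)/(2m), δ > 0, and let z = (z_1,…,z_m) ∈ ℝ^m with |z_j| ≤ δ for all j. Define S_z(t) = Σ_{j=1}^m z_j V((t−a_j)/h). Then for all s, t ∈ [0,1], |S_z^{(k)}(t) − S_z^{(k)}(s)| ≤ 2^{2+k} δ V* m^{k+α} |t−s|^α. -/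
lemma stmt10_vanish (k : ℕ) (V : ℝ → ℝ) (hV : ContDiff ℝ (k + 1) V)
    (hV0 : ∀ u : ℝ, 1 ≤ |u| → V u = 0) :
    ∀ n ≤ k + 1, ∀ u : ℝ, 1 ≤ |u| → iteratedDeriv n V u = 0 := by
  intro n
  induction n with
  | zero => intro _ u hu; simpa using hV0 u hu
  | succ n ih =>
    intro hn u hu
    have hn' : n ≤ k + 1 := le_trans (Nat.le_succ n) hn
    have hopen : ∀ x : ℝ, 1 < |x| → iteratedDeriv (n + 1) V x = 0 := by
      intro x hx
      have hset : IsOpen {y : ℝ | 1 < |y|} := isOpen_lt continuous_const continuous_abs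
      have hev : (iteratedDeriv n V) =ᶠ[nhds x] (fun _ => (0 : ℝ)) := by
        filter_upwards [hset.mem_nhds hx] with y hy
        exact ih hn' y (le_of_lt hy)
      rw [iteratedDeriv_succ, hev.deriv_eq, deriv_const]
    rcases lt_or_eq_of_le hu with hu' | hu'
    · exact hopen u hu'
    · have hcont : Continuous (iteratedDeriv (n + 1) V) :=
        hV.continuous_iteratedDeriv (n + 1) (by exact_mod_cast hn)
      rcases (abs_eq (by norm_num : (0:ℝ) ≤ 1)).mp hu'.symm with h1 | h1
      · subst h1
        have t1 : Filter.Tendsto (iteratedDeriv (n + 1) V) (nhdsWithin 1 (Set.Ioi 1))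
            (nhds (iteratedDeriv (n + 1) V 1)) := hcont.continuousAt.continuousWithinAt.tendsto
        have t2 : Filter.Tendsto (iteratedDeriv (n + 1) V) (nhdsWithin 1 (Set.Ioi 1))
            (nhds 0) := by
          apply Filter.Tendsto.congr' _ tendsto_const_nhds
          filter_upwards [self_mem_nhdsWithin] with y hy
          have : (1:ℝ) < |y| := by
            have := Set.mem_Ioi.mp hy
            rw [abs_of_pos (by linarith)]; exact this
          exact (hopen y this).symm
        exact tendsto_nhds_unique t1 t2
      · subst h1
        have t1 : Filter.Tendsto (iteratedDeriv (n + 1) V) (nhdsWithin (-1) (Set.Iio (-1)))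
            (nhds (iteratedDeriv (n + 1) V (-1))) := hcont.continuousAt.continuousWithinAt.tendsto
        have t2 : Filter.Tendsto (iteratedDeriv (n + 1) V) (nhdsWithin (-1) (Set.Iio (-1)))
            (nhds 0) := by
          apply Filter.Tendsto.congr' _ tendsto_const_nhds
          filter_upwards [self_mem_nhdsWithin] with y hy
          have hy' := Set.mem_Iio.mp hy
          have : (1:ℝ) < |y| := by
            rw [abs_of_neg (by linarith)]; linarith
          exact (hopen y this).symm
        exact tendsto_nhds_unique t1 t2

lemma stmt10_bound (k : ℕ) (V : ℝ → ℝ) (hV : ContDiff ℝ (k + 1) V)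
    (hV0 : ∀ u : ℝ, 1 ≤ |u| → V u = 0) (Vstar : ℝ)
    (hVstar : Vstar = sSup ((fun a => |iteratedDeriv (k + 1) V a|) '' Set.Icc (-1 : ℝ) 1)) :
    (0 ≤ Vstar) ∧ (∀ u : ℝ, |iteratedDeriv (k + 1) V u| ≤ Vstar) ∧
      (∀ u : ℝ, |iteratedDeriv k V u| ≤ Vstar) := by
  have hcont : Continuous (iteratedDeriv (k + 1) V) :=
    hV.continuous_iteratedDeriv (k + 1) le_rfl
  have hbdd : BddAbove ((fun a => |iteratedDeriv (k + 1) V a|) '' Set.Icc (-1 : ℝ) 1) :=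
    (isCompact_Icc.image_of_continuousOn (continuous_abs.comp hcont).continuousOn).bddAbove
  have hle : ∀ u ∈ Set.Icc (-1 : ℝ) 1, |iteratedDeriv (k + 1) V u| ≤ Vstar := by
    intro u hu
    rw [hVstar]
    exact le_csSup hbdd ⟨u, hu, rfl⟩
  have h0 : (0 : ℝ) ≤ Vstar :=
    le_trans (abs_nonneg _) (hle 0 (by constructor <;> norm_num))
  have hk1 : ∀ u : ℝ, |iteratedDeriv (k + 1) V u| ≤ Vstar := by
    intro u
    rcases le_or_gt 1 |u| with hu | hu
    · rw [stmt10_vanish k V hV hV0 (k + 1) le_rfl u hu]; simpa using h0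
    · exact hle u (abs_le.mp hu.le)
  refine ⟨h0, hk1, ?_⟩
  have hdiff : Differentiable ℝ (iteratedDeriv k V) :=
    hV.differentiable_iteratedDeriv k (by exact_mod_cast Nat.lt_succ_self k)
  have hlip : ∀ u v : ℝ, |iteratedDeriv k V u - iteratedDeriv k V v| ≤ Vstar * |u - v| := by
    intro u v
    have := Convex.norm_image_sub_le_of_norm_hasDerivWithin_le
      (f := iteratedDeriv k V) (f' := iteratedDeriv (k + 1) V) (s := Set.univ) (C := Vstar)
      (fun x _ => by
        have hx := (hdiff x).hasDerivAt
        rw [iteratedDeriv_succ]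
        exact hx.hasDerivWithinAt)
      (fun x _ => by simpa [Real.norm_eq_abs] using hk1 x)
      convex_univ (Set.mem_univ v) (Set.mem_univ u)
    simpa [Real.norm_eq_abs] using this
  intro u
  rcases le_or_gt 1 |u| with hu | hu
  · rw [stmt10_vanish k V hV hV0 k (Nat.le_succ k) u hu]; simpa using h0
  · rw [abs_lt] at hu
    rcases le_or_gt 0 u with hu0 | hu0
    · have hz : iteratedDeriv k V 1 = 0 :=
        stmt10_vanish k V hV hV0 k (Nat.le_succ k) 1 (by norm_num)
      have := hlip u 1
      rw [hz, sub_zero] at this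
      calc |iteratedDeriv k V u| ≤ Vstar * |u - 1| := this
        _ ≤ Vstar * 1 := by
            apply mul_le_mul_of_nonneg_left _ h0
            rw [abs_le]; constructor <;> linarith
        _ = Vstar := mul_one _
    · have hz : iteratedDeriv k V (-1) = 0 :=
        stmt10_vanish k V hV hV0 k (Nat.le_succ k) (-1) (by norm_num)
      have := hlip u (-1)
      rw [hz, sub_zero] at this
      calc |iteratedDeriv k V u| ≤ Vstar * |u - (-1)| := this
        _ ≤ Vstar * 1 := by
            apply mul_le_mul_of_nonneg_left _ h0
            rw [abs_le]; constructor <;> linarith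
        _ = Vstar := mul_one _

/-- Hölder smoothness of the parametric family `S_z(t) = Σ_j z_j V((t−a_j)/h)`:
under the stated conditions, for all `s, t ∈ [0,1]`,
`|S_z^{(k)}(t) − S_z^{(k)}(s)| ≤ 2^{2+k} δ V* m^{k+α} |t−s|^α`. -/
theorem stmt10 (k : ℕ) (α : ℝ) (hα0 : 0 ≤ α) (hα1 : α < 1)
    (V : ℝ → ℝ) (hV : ContDiff ℝ (k + 1) V)
    (hV0 : ∀ u : ℝ, 1 ≤ |u| → V u = 0)
    (Vstar : ℝ)
    (hVstar : Vstar = sSup ((fun a => |iteratedDeriv (k + 1) V a|) '' Set.Icc (-1 : ℝ) 1))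
    (m : ℕ) (hm : 1 ≤ m) (h : ℝ) (hh : h = 1 / (2 * m))
    (a : ℕ → ℝ) (ha : ∀ j : ℕ, a j = (2 * (j : ℝ) - 1) / (2 * m))
    (δ : ℝ) (hδ : 0 < δ) (z : ℕ → ℝ) (hz : ∀ j, |z j| ≤ δ)
    (Sz : ℝ → ℝ)
    (hSz : ∀ t : ℝ, Sz t = ∑ j ∈ Finset.Icc 1 m, z j * V ((t - a j) / h))
    (s t : ℝ) (hs : s ∈ Set.Icc (0 : ℝ) 1) (ht : t ∈ Set.Icc (0 : ℝ) 1) :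
    |iteratedDeriv k Sz t - iteratedDeriv k Sz s| ≤
      (2 : ℝ) ^ (2 + k) * δ * Vstar * (m : ℝ) ^ ((k : ℝ) + α) * |t - s| ^ α := by
  obtain ⟨hVs0, hbk1, hbk⟩ := stmt10_bound k V hV hV0 Vstar hVstar
  have hm1 : (1 : ℝ) ≤ (m : ℝ) := by exact_mod_cast hm
  have hm0 : (0 : ℝ) < (m : ℝ) := by linarith
  set c : ℝ := 2 * (m : ℝ) with hc
  have hc0 : (0 : ℝ) < c := by positivity
  -- derivatives of each summand
  have hW : ∀ n : ℕ, n < k + 1 → ∀ x : ℝ,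
      HasDerivAt (iteratedDeriv n V) (iteratedDeriv (n + 1) V x) x := by
    intro n hn x
    have hd : Differentiable ℝ (iteratedDeriv n V) :=
      hV.differentiable_iteratedDeriv n (by exact_mod_cast hn)
    have := (hd x).hasDerivAt
    rw [iteratedDeriv_succ]
    exact this
  have hHas : ∀ n : ℕ, n < k + 1 → ∀ u : ℝ,
      HasDerivAt (fun t => ∑ j ∈ Finset.Icc 1 m, z j * c ^ n * iteratedDeriv n V ((t - a j) * c))
        (∑ j ∈ Finset.Icc 1 m, z j * c ^ (n + 1) * iteratedDeriv (n + 1) V ((u - a j) * c)) u := by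
    intro n hn u
    apply HasDerivAt.fun_sum
    intro j _
    have inner : HasDerivAt (fun t : ℝ => (t - a j) * c) (1 * c) u :=
      ((hasDerivAt_id u).sub_const (a j)).mul_const c
    have hcomp := (hW n hn ((u - a j) * c)).comp u inner
    have := hcomp.const_mul (z j * c ^ n)
    convert this using 1
    · rfl
    · rfl
    ring
  -- formula for iterated derivatives of Sz
  have hA : ∀ n ≤ k + 1, iteratedDeriv n Sz =
      fun u => ∑ j ∈ Finset.Icc 1 m, z j * c ^ n * iteratedDeriv n V ((u - a j) * c) := by
    intro n
    induction n with
    | zero =>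
      intro _
      funext u
      rw [iteratedDeriv_zero, hSz]
      apply Finset.sum_congr rfl
      intro j _
      have hdiv : (u - a j) / h = (u - a j) * c := by
        rw [hh]
        field_simp
      rw [hdiv]
      simp [iteratedDeriv_zero]
    | succ n ih =>
      intro hn
      have hn' : n < k + 1 := by omega
      funext u
      rw [iteratedDeriv_succ, ih (le_of_lt hn')]
      exact (hHas n hn' u).deriv
  -- bound on sums via disjoint supports
  have hsum : ∀ n ≤ k + 1, ∀ M : ℝ, (∀ x : ℝ, |iteratedDeriv n V x| ≤ M) → ∀ u : ℝ,
      |∑ j ∈ Finset.Icc 1 m, z j * c ^ n * iteratedDeriv n V ((u - a j) * c)| ≤ δ * c ^ n * M := by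
    intro n hn M hM u
    have hM0 : 0 ≤ M := le_trans (abs_nonneg _) (hM 0)
    set S := (Finset.Icc 1 m).filter (fun j => iteratedDeriv n V ((u - a j) * c) ≠ 0) with hS
    have hmem : ∀ j ∈ S, (m : ℝ) * u < j ∧ (j : ℝ) < (m : ℝ) * u + 1 := by
      intro j hj
      have hne : iteratedDeriv n V ((u - a j) * c) ≠ 0 := (Finset.mem_filter.mp hj).2
      have hlt : |(u - a j) * c| < 1 := by
        by_contra hcon
        push_neg at hcon
        exact hne (stmt10_vanish k V hV hV0 n hn _ hcon)
      have key : (u - a j) * c = 2 * (m : ℝ) * u - 2 * (j : ℝ) + 1 := by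
        rw [ha j, hc]
        field_simp
        ring
      rw [key, abs_lt] at hlt
      obtain ⟨h1, h2⟩ := hlt
      constructor <;> linarith
    have hcard : S.card ≤ 1 := by
      rw [Finset.card_le_one]
      intro j hj j' hj'
      obtain ⟨h1, h2⟩ := hmem j hj
      obtain ⟨h3, h4⟩ := hmem j' hj'
      have : (j : ℝ) < (j' : ℝ) + 1 := by linarith
      have h5 : j ≤ j' := by exact_mod_cast Nat.lt_succ_iff.mp (by exact_mod_cast this)
      have : (j' : ℝ) < (j : ℝ) + 1 := by linarith
      have h6 : j' ≤ j := by exact_mod_cast Nat.lt_succ_iff.mp (by exact_mod_cast this)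
      omega
    have hsum_eq : ∑ j ∈ Finset.Icc 1 m, z j * c ^ n * iteratedDeriv n V ((u - a j) * c)
        = ∑ j ∈ S, z j * c ^ n * iteratedDeriv n V ((u - a j) * c) := by
      rw [hS]
      refine (Finset.sum_filter_of_ne ?_).symm
      intro x _ hx
      intro hzero
      exact hx (by rw [hzero, mul_zero])
    rw [hsum_eq]
    have hterm : ∀ j ∈ S, |z j * c ^ n * iteratedDeriv n V ((u - a j) * c)| ≤ δ * c ^ n * M := by
      intro j _
      rw [abs_mul, abs_mul, abs_of_pos (pow_pos hc0 n)]
      exact mul_le_mul (mul_le_mul_of_nonneg_right (hz j) (le_of_lt (pow_pos hc0 n))) (hM _)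
        (abs_nonneg _) (by positivity)
    have h1 : |∑ j ∈ S, z j * c ^ n * iteratedDeriv n V ((u - a j) * c)|
        ≤ ∑ _j ∈ S, (δ * c ^ n * M) :=
      le_trans (Finset.abs_sum_le_sum_abs _ _) (Finset.sum_le_sum hterm)
    have h2 : ∑ _j ∈ S, (δ * c ^ n * M) = (S.card : ℝ) * (δ * c ^ n * M) := by
      rw [Finset.sum_const, nsmul_eq_mul]
    have h3 : (S.card : ℝ) ≤ 1 := by exact_mod_cast hcard
    calc |∑ j ∈ S, z j * c ^ n * iteratedDeriv n V ((u - a j) * c)|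
        ≤ (S.card : ℝ) * (δ * c ^ n * M) := by rw [← h2]; exact h1
      _ ≤ 1 * (δ * c ^ n * M) := mul_le_mul_of_nonneg_right h3 (by positivity)
      _ = δ * c ^ n * M := one_mul _
  -- pointwise bound and Lipschitz bound for G := iteratedDeriv k Sz
  have hGeq := hA k (Nat.le_succ k)
  have hGpt : ∀ u : ℝ, |iteratedDeriv k Sz u| ≤ δ * c ^ k * Vstar := by
    intro u
    rw [hGeq]
    exact hsum k (Nat.le_succ k) Vstar hbk u
  have hGlip : |iteratedDeriv k Sz t - iteratedDeriv k Sz s| ≤ (δ * c ^ (k + 1) * Vstar) * |t - s| := by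
    have := Convex.norm_image_sub_le_of_norm_hasDerivWithin_le
      (f := iteratedDeriv k Sz)
      (f' := fun u => ∑ j ∈ Finset.Icc 1 m, z j * c ^ (k + 1) * iteratedDeriv (k + 1) V ((u - a j) * c))
      (s := Set.univ) (C := δ * c ^ (k + 1) * Vstar)
      (fun x _ => by
        rw [hGeq]
        exact (hHas k (Nat.lt_succ_self k) x).hasDerivWithinAt)
      (fun x _ => by
        simpa [Real.norm_eq_abs] using hsum (k + 1) le_rfl Vstar hbk1 x)
      convex_univ (Set.mem_univ s) (Set.mem_univ t)
    simpa [Real.norm_eq_abs] using this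
  -- final case analysis
  have hD0 : 0 ≤ |t - s| := abs_nonneg _
  have hmka : (m : ℝ) ^ ((k : ℝ) + α) = (m : ℝ) ^ k * (m : ℝ) ^ α := by
    rw [← Real.rpow_natCast (m : ℝ) k, ← Real.rpow_add hm0]
  have hpow : (2 : ℝ) ^ (k + 1) ≤ (2 : ℝ) ^ (2 + k) := by
    apply pow_le_pow_right₀ (by norm_num)
    omega
  have hRHS0 : 0 ≤ (2 : ℝ) ^ (2 + k) * δ * Vstar * (m : ℝ) ^ ((k : ℝ) + α) * |t - s| ^ α :=
    mul_nonneg (mul_nonneg (mul_nonneg (mul_nonneg (by positivity) hδ.le) hVs0)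
      (Real.rpow_nonneg hm0.le _)) (Real.rpow_nonneg hD0 _)
  rcases eq_or_lt_of_le hD0 with hD | hD
  · -- t = s
    have hts : t = s := by
      have := abs_eq_zero.mp hD.symm
      linarith [sub_eq_zero.mp this]
    have hL : |iteratedDeriv k Sz t - iteratedDeriv k Sz s| = 0 := by
      rw [hts, sub_self, abs_zero]
    rw [hL]
    exact hRHS0
  rcases le_or_gt |t - s| (1 / (m : ℝ)) with hcase | hcase
  · -- small increment: use Lipschitz bound
    have e1 : |t - s| = |t - s| ^ (1 - α) * |t - s| ^ α := by
      rw [← Real.rpow_add hD]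
      norm_num
    have e2 : |t - s| ^ (1 - α) ≤ (1 / (m : ℝ)) ^ (1 - α) :=
      Real.rpow_le_rpow hD0 hcase (by linarith)
    have e3 : (1 / (m : ℝ)) ^ (1 - α) = (m : ℝ) ^ (α - 1) := by
      rw [one_div, ← Real.rpow_neg_one (m : ℝ), ← Real.rpow_mul (le_of_lt hm0)]
      congr 1
      ring
    have e4 : (m : ℝ) ^ (k + 1) * (m : ℝ) ^ (α - 1) = (m : ℝ) ^ ((k : ℝ) + α) := by
      rw [← Real.rpow_natCast (m : ℝ) (k + 1), ← Real.rpow_add hm0]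
      congr 1
      push_cast
      ring
    have hck1 : c ^ (k + 1) = 2 ^ (k + 1) * (m : ℝ) ^ (k + 1) := by
      rw [hc, mul_pow]
    calc |iteratedDeriv k Sz t - iteratedDeriv k Sz s|
        ≤ (δ * c ^ (k + 1) * Vstar) * |t - s| := hGlip
      _ = 2 ^ (k + 1) * δ * Vstar * ((m : ℝ) ^ (k + 1) * (|t - s| ^ (1 - α) * |t - s| ^ α)) := by
          rw [hck1, ← e1]; ring
      _ ≤ 2 ^ (k + 1) * δ * Vstar * ((m : ℝ) ^ (k + 1) * ((m : ℝ) ^ (α - 1) * |t - s| ^ α)) := by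
          apply mul_le_mul_of_nonneg_left _ (mul_nonneg (mul_nonneg (by positivity) hδ.le) hVs0)
          apply mul_le_mul_of_nonneg_left _ (by positivity)
          exact mul_le_mul_of_nonneg_right (e2.trans (le_of_eq e3)) (Real.rpow_nonneg hD0 α)
      _ = 2 ^ (k + 1) * δ * Vstar * (m : ℝ) ^ ((k : ℝ) + α) * |t - s| ^ α := by
          rw [← mul_assoc ((m : ℝ) ^ (k + 1)), e4]; ring
      _ ≤ (2 : ℝ) ^ (2 + k) * δ * Vstar * (m : ℝ) ^ ((k : ℝ) + α) * |t - s| ^ α := by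
          apply mul_le_mul_of_nonneg_right _ (Real.rpow_nonneg hD0 α)
          exact mul_le_mul_of_nonneg_right (mul_le_mul_of_nonneg_right
            (mul_le_mul_of_nonneg_right hpow hδ.le) hVs0) (Real.rpow_nonneg hm0.le _)
  · -- large increment: use sup bound
    have h1m : (1 : ℝ) ≤ (m : ℝ) * |t - s| := by
      rw [div_lt_iff₀ hm0] at hcase
      nlinarith
    have hbig : (1 : ℝ) ≤ (m : ℝ) ^ α * |t - s| ^ α := by
      rw [← Real.mul_rpow (le_of_lt hm0) hD0]
      exact Real.one_le_rpow h1m hα0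
    calc |iteratedDeriv k Sz t - iteratedDeriv k Sz s|
        ≤ |iteratedDeriv k Sz t| + |iteratedDeriv k Sz s| := abs_sub _ _
      _ ≤ δ * c ^ k * Vstar + δ * c ^ k * Vstar := add_le_add (hGpt t) (hGpt s)
      _ = (2 ^ (k + 1) * δ * Vstar * (m : ℝ) ^ k) * 1 := by rw [hc, mul_pow]; ring
      _ ≤ (2 ^ (2 + k) * δ * Vstar * (m : ℝ) ^ k) * ((m : ℝ) ^ α * |t - s| ^ α) := by
          apply mul_le_mul _ hbig zero_le_one
            (mul_nonneg (mul_nonneg (mul_nonneg (by positivity) hδ.le) hVs0) (by positivity))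
          exact mul_le_mul_of_nonneg_right (mul_le_mul_of_nonneg_right
            (mul_le_mul_of_nonneg_right hpow hδ.le) hVs0) (by positivity)
      _ = (2 : ℝ) ^ (2 + k) * δ * Vstar * (m : ℝ) ^ ((k : ℝ) + α) * |t - s| ^ α := by
          rw [hmka]; ring
end

section
/- Let (s_i)_{i≥1} be a sequence of real numbers, β > 1 and r > 0, and assume Σ_{i≥n} s_i² ≤ r² n^{−2β} for every integer n ≥ 1. Then for every integer j ≥ 0, Σ_{i≥j+1} i² s_i² ≤ r² (j+1)^{−2(β−1)} · β/(β−1). -/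
lemma aux_mvt11 (β : ℝ) (hβ : 1 < β) (a : ℝ) (ha : 1 ≤ a) :
    (2*β - 2) * (a+1) ^ (1 - 2*β) ≤ a ^ (2 - 2*β) - (a+1) ^ (2 - 2*β) := by
  have ha0 : (0:ℝ) < a := lt_of_lt_of_le zero_lt_one ha
  have hab : a < a + 1 := lt_add_one a
  have hcont : ContinuousOn (fun x : ℝ => x ^ (2 - 2*β)) (Set.Icc a (a+1)) := by
    intro x hx
    exact (Real.continuousAt_rpow_const x _ (Or.inl (ne_of_gt (lt_of_lt_of_le ha0 hx.1)))).continuousWithinAt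
  have hderiv : ∀ x ∈ Set.Ioo a (a+1), HasDerivAt (fun x : ℝ => x ^ (2 - 2*β))
      ((2 - 2*β) * x ^ (2 - 2*β - 1)) x := fun x hx =>
    Real.hasDerivAt_rpow_const (Or.inl (ne_of_gt (ha0.trans hx.1)))
  obtain ⟨c, hc, hceq⟩ := exists_hasDerivAt_eq_slope _ _ hab hcont hderiv
  have hc0 : 0 < c := ha0.trans hc.1
  simp only [add_sub_cancel_left, div_one] at hceq
  have hkey : a ^ (2 - 2*β) - (a+1) ^ (2 - 2*β) = (2*β - 2) * c ^ (1 - 2*β) := by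
    have h1 : (2 - 2*β - 1) = 1 - 2*β := by ring
    rw [h1] at hceq
    linarith [hceq]
  rw [hkey]
  have hcle : c ≤ a + 1 := hc.2.le
  have : (a+1) ^ (1 - 2*β) ≤ c ^ (1 - 2*β) :=
    Real.rpow_le_rpow_of_nonpos hc0 hcle (by linarith)
  have h2 : (0:ℝ) < 2*β - 2 := by linarith
  nlinarith

/-- Weighted tail bound: if `Σ_{i≥n} s_i² ≤ r² n^{−2β}` for all `n ≥ 1`
(with `β > 1`), then for every `j ≥ 0`,
`Σ_{i≥j+1} i² s_i² ≤ r² (j+1)^{−2(β−1)} β/(β−1)`. -/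
theorem stmt11 (s : ℕ → ℝ) (β r : ℝ) (hβ : 1 < β) (hr : 0 < r)
    (hsum : Summable (fun i => s i ^ 2))
    (htail : ∀ n : ℕ, 1 ≤ n → ∑' i : ℕ, s (n + i) ^ 2 ≤ r ^ 2 * (n : ℝ) ^ (-(2 * β))) :
    Summable (fun i : ℕ => (i : ℝ) ^ 2 * s i ^ 2) ∧
      ∀ j : ℕ, ∑' i : ℕ, ((j + 1 + i : ℕ) : ℝ) ^ 2 * s (j + 1 + i) ^ 2 ≤
        r ^ 2 * ((j : ℝ) + 1) ^ (-(2 * (β - 1))) * (β / (β - 1)) := by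
  have hβ1 : (0:ℝ) < β - 1 := by linarith
  have h2β2 : (0:ℝ) < 2*β - 2 := by linarith
  set T : ℕ → ℝ := fun n => ∑' i : ℕ, s (n + i) ^ 2 with hTdef
  have hTsm : ∀ n : ℕ, Summable (fun i => s (n + i) ^ 2) := by
    intro n
    have := (summable_nat_add_iff n).2 hsum
    simpa [add_comm] using this
  have hTnn : ∀ n, 0 ≤ T n := fun n => tsum_nonneg fun i => sq_nonneg _
  have hTle : ∀ n : ℕ, 1 ≤ n → T n ≤ r ^ 2 * (n:ℝ) ^ (-(2*β)) := htail
  have hrec : ∀ n : ℕ, s n ^ 2 = T n - T (n+1) := by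
    intro n
    have h1 : T n = s (n+0) ^ 2 + ∑' i, s (n + (i+1)) ^ 2 := Summable.tsum_eq_zero_add (hTsm n)
    have h2 : ∑' i, s (n + (i+1)) ^ 2 = T (n+1) := by
      apply tsum_congr
      intro i
      rw [show n + (i+1) = (n+1) + i from by omega]
    rw [h2, Nat.add_zero] at h1
    linarith
  set C : ℝ := 2 * r^2 / (2*β - 2) with hCdef
  have hC0 : 0 ≤ C := div_nonneg (by positivity) h2β2.le
  have hC2 : C * (2*β - 2) = 2 * r^2 := by
    rw [hCdef]
    field_simp
  set g : ℕ → ℝ := fun n => (n:ℝ)^2 * T n + C * (n:ℝ) ^ (2 - 2*β) with hgdef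
  have hgnn : ∀ n, 0 ≤ g n := by
    intro n
    apply add_nonneg
    · exact mul_nonneg (sq_nonneg _) (hTnn n)
    · exact mul_nonneg hC0 (Real.rpow_nonneg (Nat.cast_nonneg n) _)
  -- key per-term bound
  have key : ∀ n : ℕ, 1 ≤ n → (n:ℝ)^2 * s n ^ 2 ≤ g n - g (n+1) := by
    intro n hn
    have hn1 : (1:ℝ) ≤ (n:ℝ) := by exact_mod_cast hn
    have hn0 : (0:ℝ) < (n:ℝ) + 1 := by linarith
    have hcast : ((n+1 : ℕ) : ℝ) = (n:ℝ) + 1 := by push_cast; ring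
    have h1 : (n:ℝ)^2 * s n ^ 2 =
        ((n:ℝ)^2 * T n - ((n:ℝ)+1)^2 * T (n+1)) + (2*(n:ℝ)+1) * T (n+1) := by
      rw [hrec n]; ring
    have hTn1 : T (n+1) ≤ r^2 * ((n:ℝ)+1) ^ (-(2*β)) := by
      have := hTle (n+1) (by omega)
      rwa [hcast] at this
    have h2 : (2*(n:ℝ)+1) * T (n+1) ≤ (2*(n:ℝ)+2) * (r^2 * ((n:ℝ)+1) ^ (-(2*β))) := by
      apply mul_le_mul (by linarith) hTn1 (hTnn _)
      positivity
    have h3 : (2*(n:ℝ)+2) * (r^2 * ((n:ℝ)+1) ^ (-(2*β))) = 2*r^2 * ((n:ℝ)+1) ^ (1 - 2*β) := by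
      rw [show (1 - 2*β) = 1 + (-(2*β)) by ring, Real.rpow_add hn0, Real.rpow_one]
      ring
    have h4 : 2*r^2 * ((n:ℝ)+1) ^ (1 - 2*β) ≤
        C * ((n:ℝ) ^ (2 - 2*β) - ((n:ℝ)+1) ^ (2 - 2*β)) := by
      have haux := aux_mvt11 β hβ (n:ℝ) hn1
      have := mul_le_mul_of_nonneg_left haux hC0
      calc 2*r^2 * ((n:ℝ)+1) ^ (1 - 2*β)
          = C * ((2*β - 2) * ((n:ℝ)+1) ^ (1 - 2*β)) := by rw [← mul_assoc, mul_comm C, ← hC2]; ring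
        _ ≤ C * ((n:ℝ) ^ (2 - 2*β) - ((n:ℝ)+1) ^ (2 - 2*β)) := this
    have hgn : g n - g (n+1) = ((n:ℝ)^2 * T n - ((n:ℝ)+1)^2 * T (n+1))
        + C * ((n:ℝ) ^ (2 - 2*β) - ((n:ℝ)+1) ^ (2 - 2*β)) := by
      simp only [hgdef, hcast]; ring
    rw [h1, hgn]
    linarith
  -- telescoping bound on finite sums
  have bound : ∀ m N : ℕ, 1 ≤ m → ∑ n ∈ Finset.Ico m N, (n:ℝ)^2 * s n ^ 2 ≤ g m := by
    intro m N hm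
    rcases le_or_gt m N with h | h
    · have step : ∑ n ∈ Finset.Ico m N, (n:ℝ)^2 * s n ^ 2 ≤
          ∑ n ∈ Finset.Ico m N, (g n - g (n+1)) := by
        apply Finset.sum_le_sum
        intro n hn
        exact key n (le_trans hm (Finset.mem_Ico.1 hn).1)
      have tele : ∑ n ∈ Finset.Ico m N, (g n - g (n+1)) = g m - g N := by
        rw [Finset.sum_Ico_eq_sum_range]
        have := Finset.sum_range_sub' (fun k => g (m + k)) (N - m)
        calc ∑ i ∈ Finset.range (N - m), (g (m + i) - g (m + i + 1))
            = ∑ i ∈ Finset.range (N - m), ((fun k => g (m + k)) i - (fun k => g (m + k)) (i+1)) := by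
              apply Finset.sum_congr rfl; intro i _; simp [Nat.add_assoc]
          _ = g (m + 0) - g (m + (N - m)) := this
          _ = g m - g N := by rw [Nat.add_zero, Nat.add_sub_cancel' h]
      calc ∑ n ∈ Finset.Ico m N, (n:ℝ)^2 * s n ^ 2 ≤ g m - g N := by rw [← tele]; exact step
        _ ≤ g m := by linarith [hgnn N]
    · rw [Finset.Ico_eq_empty (by omega)]
      simpa using hgnn m
  -- bound on g m
  have gle : ∀ m : ℕ, 1 ≤ m → g m ≤ r^2 * (m:ℝ) ^ (2 - 2*β) * (β / (β - 1)) := by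
    intro m hm
    have hm0 : (0:ℝ) < (m:ℝ) := by exact_mod_cast hm
    have hTm : T m ≤ r^2 * (m:ℝ) ^ (-(2*β)) := hTle m hm
    have hmul : (m:ℝ)^2 * ((m:ℝ) ^ (-(2*β))) = (m:ℝ) ^ (2 - 2*β) := by
      rw [show ((m:ℝ)^2 : ℝ) = (m:ℝ) ^ ((2:ℕ):ℝ) from (Real.rpow_natCast _ 2).symm,
        ← Real.rpow_add hm0]
      norm_num
      ring_nf
    have h1 : g m ≤ r^2 * (m:ℝ) ^ (2 - 2*β) + C * (m:ℝ) ^ (2 - 2*β) := by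
      simp only [hgdef]
      have : (m:ℝ)^2 * T m ≤ (m:ℝ)^2 * (r^2 * (m:ℝ) ^ (-(2*β))) :=
        mul_le_mul_of_nonneg_left hTm (sq_nonneg _)
      rw [show (m:ℝ)^2 * (r^2 * (m:ℝ) ^ (-(2*β))) = r^2 * ((m:ℝ)^2 * ((m:ℝ) ^ (-(2*β)))) by ring,
        hmul] at this
      linarith
    have h2 : r^2 * (m:ℝ) ^ (2 - 2*β) + C * (m:ℝ) ^ (2 - 2*β)
        = r^2 * (m:ℝ) ^ (2 - 2*β) * (β / (β - 1)) := by
      rw [hCdef]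
      field_simp
      ring
    calc g m ≤ r^2 * (m:ℝ) ^ (2 - 2*β) + C * (m:ℝ) ^ (2 - 2*β) := h1
      _ = r^2 * (m:ℝ) ^ (2 - 2*β) * (β / (β - 1)) := h2
  have main : ∀ m N : ℕ, 1 ≤ m → ∑ n ∈ Finset.Ico m N, (n:ℝ)^2 * s n ^ 2 ≤
      r^2 * (m:ℝ) ^ (2 - 2*β) * (β / (β - 1)) := fun m N hm => (bound m N hm).trans (gle m hm)
  have hnonneg : ∀ n : ℕ, 0 ≤ (n:ℝ)^2 * s n ^ 2 := fun n => mul_nonneg (sq_nonneg _) (sq_nonneg _)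
  constructor
  · apply summable_of_sum_range_le hnonneg (c := r^2 * (1:ℝ) ^ (2 - 2*β) * (β / (β - 1)))
    intro N
    rcases N with _ | N
    · simp
      positivity
    · rw [Finset.range_eq_Ico, Finset.sum_eq_sum_Ico_succ_bot (Nat.succ_pos N)]
      simp only [Nat.cast_zero, zero_pow, ne_eq, OfNat.ofNat_ne_zero, not_false_eq_true,
        zero_mul, zero_add]
      simpa using main 1 (N+1) le_rfl
  · intro j
    have hexp : (-(2 * (β - 1))) = 2 - 2*β := by ring
    have hcast : ((j:ℝ) + 1) = ((j+1 : ℕ) : ℝ) := by push_cast; ring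
    rw [hexp, hcast]
    apply Real.tsum_le_of_sum_range_le (fun n => hnonneg _)
    intro N
    have := main (j+1) (j+1+N) (by omega)
    rw [Finset.sum_Ico_eq_sum_range] at this
    simpa using this
end

section
/- Let p ≥ 1 be an integer, let f : [0,1] → ℝ be continuously differentiable, and for 1 ≤ l ≤ p set h_l(f) = p ∫_{(l−1)/p}^{l/p} (f(t) − f(l/p)) dt. Then (1/p) Σ_{l=1}^p h_l(f)² ≤ p^{−2} ∫_0^1 f′(t)² dt. -/
open intervalIntegral

lemma cs_aux {a b : ℝ} (hab : a ≤ b) {g : ℝ → ℝ} (hg : ContinuousOn g (Set.Icc a b)) :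
    (∫ t in a..b, g t) ^ 2 ≤ (b - a) * ∫ t in a..b, g t ^ 2 := by
  rcases eq_or_lt_of_le hab with rfl | hlt
  · simp
  have hba : (0:ℝ) < b - a := sub_pos.mpr hlt
  have hgi : IntervalIntegrable g MeasureTheory.volume a b := by
    exact hg.intervalIntegrable_of_Icc hab
  have hg2i : IntervalIntegrable (fun t => g t ^ 2) MeasureTheory.volume a b := by
    exact (hg.pow 2).intervalIntegrable_of_Icc hab
  set c : ℝ := (∫ t in a..b, g t) / (b - a) with hc
  have h0 : 0 ≤ ∫ t in a..b, (g t - c) ^ 2 :=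
    integral_nonneg hab fun t _ => sq_nonneg _
  have hexp : ∫ t in a..b, (g t - c) ^ 2
      = (∫ t in a..b, g t ^ 2) - 2 * c * (∫ t in a..b, g t) + (b - a) * c ^ 2 := by
    have : ∀ t, (g t - c) ^ 2 = g t ^ 2 - (2 * c) * g t + c ^ 2 := fun t => by ring
    simp_rw [this]
    rw [integral_add ((hg2i.sub (hgi.const_mul _))) intervalIntegrable_const,
      integral_sub hg2i (hgi.const_mul _), integral_const_mul, integral_const]
    ring_nf
  have hcb : c * (b - a) = ∫ t in a..b, g t := by
    rw [hc, div_mul_cancel₀ _ hba.ne']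
  nlinarith [h0, hexp, sq_nonneg c]

/-- Bound for the averaged deviations: with
`h_l(f) = p ∫_{(l−1)/p}^{l/p} (f(t) − f(l/p)) dt`, one has
`(1/p) Σ_{l=1}^p h_l(f)² ≤ p^{−2} ∫_0^1 f′(t)² dt`. -/
theorem stmt13 (p : ℕ) (hp : 1 ≤ p) (f f' : ℝ → ℝ)
    (hdf : ∀ t ∈ Set.Icc (0 : ℝ) 1, HasDerivWithinAt f (f' t) (Set.Icc 0 1) t)
    (hcf' : ContinuousOn f' (Set.Icc 0 1))
    (hfun : ℕ → ℝ)
    (hh : ∀ l : ℕ, hfun l = (p : ℝ) * ∫ t in (((l : ℝ) - 1) / p)..((l : ℝ) / p), (f t - f ((l : ℝ) / p))) :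
    (1 / (p : ℝ)) * ∑ l ∈ Finset.Icc 1 p, hfun l ^ 2 ≤
      ((p : ℝ) ^ 2)⁻¹ * ∫ t in (0 : ℝ)..1, f' t ^ 2 := by
  have hp0 : (0:ℝ) < p := by exact_mod_cast hp
  have hcontf : ContinuousOn f (Set.Icc 0 1) := fun x hx => (hdf x hx).continuousWithinAt
  -- FTC
  have ftc : ∀ t b : ℝ, 0 ≤ t → t ≤ b → b ≤ 1 → ∫ s in t..b, f' s = f b - f t := by
    intro t b h0 htb hb1
    apply integral_eq_sub_of_hasDerivAt_of_le htb
    · exact hcontf.mono (Set.Icc_subset_Icc h0 hb1)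
    · intro x hx
      have hx1 : x ∈ Set.Ioo (0:ℝ) 1 := ⟨lt_of_le_of_lt h0 hx.1, lt_of_lt_of_le hx.2 hb1⟩
      exact (hdf x (Set.Ioo_subset_Icc_self hx1)).hasDerivAt (Icc_mem_nhds hx1.1 hx1.2)
    · exact (hcf'.mono (Set.Icc_subset_Icc h0 hb1)).intervalIntegrable_of_Icc htb
  -- key per-interval bound
  have key : ∀ a b : ℝ, 0 ≤ a → a ≤ b → b ≤ 1 →
      (∫ t in a..b, (f t - f b)) ^ 2 ≤ (b - a) ^ 3 * ∫ s in a..b, f' s ^ 2 := by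
    intro a b h0 hab hb1
    set I := ∫ s in a..b, f' s ^ 2 with hI
    have hInn : 0 ≤ I := integral_nonneg hab fun t _ => sq_nonneg _
    have hsub : Set.Icc a b ⊆ Set.Icc (0:ℝ) 1 := Set.Icc_subset_Icc h0 hb1
    have hg : ContinuousOn (fun t => f t - f b) (Set.Icc a b) :=
      (hcontf.mono hsub).sub continuousOn_const
    have step1 := cs_aux hab hg
    have hptw : ∀ t ∈ Set.Icc a b, (f t - f b) ^ 2 ≤ (b - a) * I := by
      intro t ht
      have he : f t - f b = -(∫ s in t..b, f' s) := by
        rw [ftc t b (h0.trans ht.1) ht.2 hb1]; ring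
      have h1 : (f t - f b) ^ 2 = (∫ s in t..b, f' s) ^ 2 := by rw [he]; ring
      have h2 := cs_aux ht.2 (hcf'.mono (Set.Icc_subset_Icc (h0.trans ht.1) hb1))
      have h3 : (∫ s in t..b, f' s ^ 2) ≤ I := by
        rw [hI]
        exact integral_mono_interval (μ := MeasureTheory.volume) ht.1 ht.2 le_rfl
          (Filter.Eventually.of_forall fun x => sq_nonneg _)
          (((hcf'.mono hsub).pow 2).intervalIntegrable_of_Icc hab)
      have h4 : (0:ℝ) ≤ ∫ s in t..b, f' s ^ 2 := integral_nonneg ht.2 fun _ _ => sq_nonneg _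
      calc (f t - f b) ^ 2 = (∫ s in t..b, f' s) ^ 2 := h1
        _ ≤ (b - t) * ∫ s in t..b, f' s ^ 2 := h2
        _ ≤ (b - a) * I := by
            apply mul_le_mul (by linarith [ht.1]) h3 h4 (by linarith)
    have step2 : (∫ t in a..b, (f t - f b) ^ 2) ≤ (b - a) * ((b - a) * I) := by
      have := integral_mono_on (μ := MeasureTheory.volume) hab ((hg.pow 2).intervalIntegrable_of_Icc hab)
        intervalIntegrable_const hptw
      rwa [integral_const, smul_eq_mul] at this
    have hba : 0 ≤ b - a := by linarith
    calc (∫ t in a..b, (f t - f b)) ^ 2 ≤ (b - a) * ∫ t in a..b, (f t - f b) ^ 2 := step1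
      _ ≤ (b - a) * ((b - a) * ((b - a) * I)) := by
          exact mul_le_mul_of_nonneg_left step2 hba
      _ = (b - a) ^ 3 * I := by ring
  -- sum of integrals over adjacent intervals
  have hadj : ∑ k ∈ Finset.range p, (∫ s in ((k:ℝ)/p)..(((k:ℝ)+1)/p), f' s ^ 2)
      = ∫ s in (0:ℝ)..1, f' s ^ 2 := by
    have := sum_integral_adjacent_intervals (μ := MeasureTheory.volume)
      (f := fun s => f' s ^ 2) (a := fun k : ℕ => (k:ℝ)/p) (n := p) ?_
    · simpa [Nat.cast_pos.mpr, div_self (ne_of_gt hp0)] using this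
    · intro k hk
      have hk1 : ((k:ℝ)+1)/p ≤ 1 := by
        rw [div_le_one hp0]
        exact_mod_cast Nat.succ_le_of_lt hk
      have hk0 : (0:ℝ) ≤ (k:ℝ)/p := by positivity
      have hkk : ((k:ℝ))/p ≤ ((k:ℝ)+1)/p := by
        apply (div_le_div_iff_of_pos_right hp0).mpr; linarith
      have : ContinuousOn (fun s => f' s ^ 2) (Set.Icc ((k:ℝ)/p) (((k:ℝ)+1)/p)) :=
        (hcf'.pow 2).mono (Set.Icc_subset_Icc hk0 hk1)
      exact_mod_cast this.intervalIntegrable_of_Icc hkk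
  -- per-l bound on hfun
  have hl : ∀ l ∈ Finset.Icc 1 p, hfun l ^ 2 ≤
      (1/(p:ℝ)) * ∫ s in (((l:ℝ)-1)/p)..((l:ℝ)/p), f' s ^ 2 := by
    intro l hl
    rw [Finset.mem_Icc] at hl
    have h1l : (1:ℝ) ≤ (l:ℝ) := by exact_mod_cast hl.1
    have hlp : (l:ℝ) ≤ p := by exact_mod_cast hl.2
    have h0a : 0 ≤ ((l:ℝ)-1)/p := div_nonneg (by linarith) hp0.le
    have hab : ((l:ℝ)-1)/p ≤ (l:ℝ)/p := by
      apply (div_le_div_iff_of_pos_right hp0).mpr; linarith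
    have hb1 : (l:ℝ)/p ≤ 1 := by rw [div_le_one hp0]; exact hlp
    have hk := key _ _ h0a hab hb1
    have hd : (l:ℝ)/p - ((l:ℝ)-1)/p = 1/p := by field_simp; ring
    rw [hd] at hk
    rw [hh l, mul_pow]
    calc (p:ℝ)^2 * (∫ t in (((l:ℝ)-1)/p)..((l:ℝ)/p), (f t - f ((l:ℝ)/p))) ^ 2
        ≤ (p:ℝ)^2 * ((1/(p:ℝ))^3 * ∫ s in (((l:ℝ)-1)/p)..((l:ℝ)/p), f' s ^ 2) :=
          mul_le_mul_of_nonneg_left hk (by positivity)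
      _ = (1/(p:ℝ)) * ∫ s in (((l:ℝ)-1)/p)..((l:ℝ)/p), f' s ^ 2 := by
          field_simp
  -- combine
  have hsum : ∑ l ∈ Finset.Icc 1 p, hfun l ^ 2 ≤
      (1/(p:ℝ)) * ∫ s in (0:ℝ)..1, f' s ^ 2 := by
    calc ∑ l ∈ Finset.Icc 1 p, hfun l ^ 2
        ≤ ∑ l ∈ Finset.Icc 1 p, (1/(p:ℝ)) * ∫ s in (((l:ℝ)-1)/p)..((l:ℝ)/p), f' s ^ 2 :=
          Finset.sum_le_sum hl
      _ = (1/(p:ℝ)) * ∑ l ∈ Finset.Icc 1 p, ∫ s in (((l:ℝ)-1)/p)..((l:ℝ)/p), f' s ^ 2 := by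
          rw [Finset.mul_sum]
      _ = (1/(p:ℝ)) * ∫ s in (0:ℝ)..1, f' s ^ 2 := by
          rw [← hadj]
          congr 1
          rw [← Finset.Ico_add_one_right_eq_Icc, Finset.sum_Ico_eq_sum_range]
          apply Finset.sum_congr (by norm_num)
          intro i _
          congr 1 <;> push_cast <;> ring
  calc (1/(p:ℝ)) * ∑ l ∈ Finset.Icc 1 p, hfun l ^ 2
      ≤ (1/(p:ℝ)) * ((1/(p:ℝ)) * ∫ s in (0:ℝ)..1, f' s ^ 2) :=
        mul_le_mul_of_nonneg_left hsum (by positivity)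
    _ = ((p:ℝ)^2)⁻¹ * ∫ t in (0:ℝ)..1, f' t ^ 2 := by
        rw [← mul_assoc, one_div, ← mul_inv, ← sq]
end

section
/- Let n ≥ 1, θ ≤ 0, and let g : [0, n] → ℝ be square integrable. Then |θ ∫_0^n e^{θv} (∫_v^n g(t) g(t−v) dt) dv| ≤ ∫_0^n g(t)² dt. In particular, θ ∫_0^n e^{θv} (∫_v^n g(t) g(t−v) dt) dv + ∫_0^n g(t)² dt ≤ 2 ∫_0^n g(t)² dt. -/
open intervalIntegral

open MeasureTheory in
private lemma innerBound15 (n : ℕ) (g : ℝ → ℝ) (hgm : Measurable g)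
    (hg : IntegrableOn (fun t => g t ^ 2) (Set.Icc 0 (n : ℝ))) (v : ℝ)
    (hv0 : 0 ≤ v) (hvn : v ≤ (n : ℝ)) :
    |∫ t in v..(n : ℝ), g t * g (t - v)| ≤ ∫ t in (0 : ℝ)..(n : ℝ), g t ^ 2 := by
  have hn0 : (0 : ℝ) ≤ (n : ℝ) := Nat.cast_nonneg n
  have hg2 : IntervalIntegrable (fun t => g t ^ 2) MeasureTheory.volume 0 (n : ℝ) := by
    rw [intervalIntegrable_iff_integrableOn_Ioc_of_le hn0]
    exact hg.mono_set Set.Ioc_subset_Icc_self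
  have hg2v : IntervalIntegrable (fun t => g t ^ 2) MeasureTheory.volume v (n : ℝ) :=
    hg2.mono_set (by
      rw [Set.uIcc_of_le hvn, Set.uIcc_of_le hn0]
      exact Set.Icc_subset_Icc hv0 le_rfl)
  have hg2v' : IntervalIntegrable (fun t => g t ^ 2) MeasureTheory.volume 0 ((n : ℝ) - v) :=
    hg2.mono_set (by
      rw [Set.uIcc_of_le (by linarith), Set.uIcc_of_le hn0]
      exact Set.Icc_subset_Icc le_rfl (by linarith))
  have hgsub : IntervalIntegrable (fun t => g (t - v) ^ 2) MeasureTheory.volume v (n : ℝ) := by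
    have := hg2v'.comp_sub_right v
    simpa using this
  have hsum : IntervalIntegrable (fun t => (g t ^ 2 + g (t - v) ^ 2) / 2)
      MeasureTheory.volume v (n : ℝ) := (hg2v.add hgsub).div_const 2
  have habs : |∫ t in v..(n : ℝ), g t * g (t - v)| ≤
      ∫ t in v..(n : ℝ), (g t ^ 2 + g (t - v) ^ 2) / 2 := by
    refine (intervalIntegral.abs_integral_le_integral_abs hvn).trans ?_
    rw [intervalIntegral.integral_of_le hvn, intervalIntegral.integral_of_le hvn]
    refine MeasureTheory.integral_mono_of_nonneg
      (Filter.Eventually.of_forall fun t => abs_nonneg _)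
      ((intervalIntegrable_iff_integrableOn_Ioc_of_le hvn).mp hsum)
      (Filter.Eventually.of_forall fun t => ?_)
    have h1 := sq_nonneg (g t - g (t - v))
    have h2 := sq_nonneg (g t + g (t - v))
    rw [abs_le]
    constructor <;> nlinarith
  have hsplit : ∫ t in v..(n : ℝ), (g t ^ 2 + g (t - v) ^ 2) / 2 =
      ((∫ t in v..(n : ℝ), g t ^ 2) + ∫ t in v..(n : ℝ), g (t - v) ^ 2) / 2 := by
    rw [← intervalIntegral.integral_add hg2v hgsub, intervalIntegral.integral_div]
  have h1 : (∫ t in v..(n : ℝ), g t ^ 2) ≤ ∫ t in (0 : ℝ)..(n : ℝ), g t ^ 2 :=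
    intervalIntegral.integral_mono_interval hv0 hvn le_rfl
      (Filter.Eventually.of_forall fun t => sq_nonneg _) hg2
  have h2 : (∫ t in v..(n : ℝ), g (t - v) ^ 2) ≤ ∫ t in (0 : ℝ)..(n : ℝ), g t ^ 2 := by
    rw [intervalIntegral.integral_comp_sub_right (fun t => g t ^ 2) v, sub_self]
    exact intervalIntegral.integral_mono_interval le_rfl (by linarith) (by linarith)
      (Filter.Eventually.of_forall fun t => sq_nonneg _) hg2
  calc |∫ t in v..(n : ℝ), g t * g (t - v)| ≤ _ := habs
    _ = _ := hsplit
    _ ≤ _ := by linarith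

/-- Autocorrelation bound for the Ornstein–Uhlenbeck variance formula: for
`θ ≤ 0` and square-integrable `g` on `[0,n]`,
`|θ ∫_0^n e^{θv} (∫_v^n g(t)g(t−v) dt) dv| ≤ ∫_0^n g²`, hence
`θ ∫_0^n e^{θv} (∫_v^n g(t)g(t−v) dt) dv + ∫_0^n g² ≤ 2 ∫_0^n g²`. -/
theorem stmt15 (n : ℕ) (hn : 1 ≤ n) (θ : ℝ) (hθ : θ ≤ 0)
    (g : ℝ → ℝ) (hgm : Measurable g)
    (hg : MeasureTheory.IntegrableOn (fun t => g t ^ 2) (Set.Icc 0 (n : ℝ))) :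
    |θ * ∫ v in (0 : ℝ)..(n : ℝ), Real.exp (θ * v) * ∫ t in v..(n : ℝ), g t * g (t - v)| ≤
        ∫ t in (0 : ℝ)..(n : ℝ), g t ^ 2 ∧
      θ * (∫ v in (0 : ℝ)..(n : ℝ), Real.exp (θ * v) * ∫ t in v..(n : ℝ), g t * g (t - v)) +
          (∫ t in (0 : ℝ)..(n : ℝ), g t ^ 2) ≤
        2 * ∫ t in (0 : ℝ)..(n : ℝ), g t ^ 2 := by
  have hn0 : (0 : ℝ) ≤ (n : ℝ) := Nat.cast_nonneg n
  set C := ∫ t in (0 : ℝ)..(n : ℝ), g t ^ 2 with hC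
  have hC0 : 0 ≤ C :=
    intervalIntegral.integral_nonneg hn0 (fun t _ => sq_nonneg _)
  set J := ∫ v in (0 : ℝ)..(n : ℝ), Real.exp (θ * v) * ∫ t in v..(n : ℝ), g t * g (t - v)
    with hJ
  have hmain : |θ * J| ≤ C := by
    rcases eq_or_lt_of_le hθ with rfl | hθ'
    · simpa using hC0
    · -- θ < 0
      have hexpInt : MeasureTheory.IntegrableOn
          (fun v => Real.exp (θ * v) * C) (Set.Ioc (0 : ℝ) (n : ℝ)) :=
        (((Real.continuous_exp.comp (continuous_const.mul continuous_id)).mul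
          continuous_const).integrableOn_Icc (a := 0) (b := (n:ℝ))).mono_set
          Set.Ioc_subset_Icc_self
      have hJle : |J| ≤ ∫ v in Set.Ioc (0 : ℝ) (n : ℝ), Real.exp (θ * v) * C := by
        rw [hJ, intervalIntegral.integral_of_le hn0]
        rw [← Real.norm_eq_abs]
        refine (MeasureTheory.norm_integral_le_integral_norm _).trans ?_
        simp only [Real.norm_eq_abs]
        refine MeasureTheory.integral_mono_of_nonneg
          (Filter.Eventually.of_forall fun v => abs_nonneg _) hexpInt ?_
        filter_upwards [MeasureTheory.ae_restrict_mem measurableSet_Ioc] with v hv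
        rw [abs_mul, abs_of_pos (Real.exp_pos _)]
        exact mul_le_mul_of_nonneg_left
          (innerBound15 n g hgm hg v hv.1.le hv.2) (Real.exp_pos _).le
      have hexpval : (∫ v in Set.Ioc (0 : ℝ) (n : ℝ), Real.exp (θ * v) * C) =
          θ⁻¹ * (Real.exp (θ * n) - 1) * C := by
        rw [← intervalIntegral.integral_of_le hn0, intervalIntegral.integral_mul_const]
        congr 1
        rw [intervalIntegral.integral_comp_mul_left (f := Real.exp) (ne_of_lt hθ'),
          integral_exp]
        simp [smul_eq_mul]
      have hexp1 : Real.exp (θ * n) ≤ 1 := Real.exp_le_one_iff.mpr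
        (mul_nonpos_of_nonpos_of_nonneg hθ hn0)
      have hexp0 : 0 < Real.exp (θ * n) := Real.exp_pos _
      rw [abs_mul, abs_of_neg hθ']
      calc -θ * |J| ≤ -θ * (θ⁻¹ * (Real.exp (θ * n) - 1) * C) := by
            refine mul_le_mul_of_nonneg_left ?_ (by linarith)
            rw [← hexpval]; exact hJle
        _ = (1 - Real.exp (θ * n)) * C := by
            have hθne : θ ≠ 0 := ne_of_lt hθ'
            field_simp
            ring
        _ ≤ 1 * C := by
            apply mul_le_mul_of_nonneg_right _ hC0
            linarith
        _ = C := one_mul C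
  refine ⟨hmain, ?_⟩
  have : θ * J ≤ C := le_trans (le_abs_self _) hmain
  linarith
end
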